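/- The convolution equation with the box blur filter F = (1/9)·J (J the all-ones 3×3 matrix) under zero boundary condition has a unique solution X ∈ ℝ^{m×n} for every B ∈ ℝ^{m×n} if and only if neither m nor n is congruent to 2 mod 3 (i.e., m, n ∉ {3l−1 : l ∈ ℕ}). -/
import Mathlib


open Matrix

/-- Zero padding of an `m × n` matrix, in the paper's 1-based indexing:
`padZ X i j = X_{ij}` if `1 ≤ i ≤ m` and `1 ≤ j ≤ n`, and `0` otherwise. -/
def padZ {m n : ℕ} (X : Matrix (Fin m) (Fin n) ℝ) (i j : ℕ) : ℝ :=
  if h : 1 ≤ i ∧ i ≤ m ∧ 1 ≤ j ∧ j ≤ n then X ⟨i - 1, by omega⟩ ⟨j - 1, by omega⟩ else 0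

/-- The convolution `F ∗ X` with the zero boundary condition:
`(F ∗ X)_{ij} = Σ_{l₁=1}^{3} Σ_{l₂=1}^{3} f_{l₁l₂} x_{i−l₁+2, j−l₂+2}`. -/
def convZ {m n : ℕ} (F : Matrix (Fin 3) (Fin 3) ℝ) (X : Matrix (Fin m) (Fin n) ℝ) :
    Matrix (Fin m) (Fin n) ℝ :=
  Matrix.of fun i j =>
    ∑ l₁ : Fin 3, ∑ l₂ : Fin 3,
      F l₁ l₂ * padZ X ((i : ℕ) + 2 - (l₁ : ℕ)) ((j : ℕ) + 2 - (l₂ : ℕ))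

/-- The box blur filter `(1/9)·J`. -/
noncomputable def boxFilter : Matrix (Fin 3) (Fin 3) ℝ := Matrix.of fun _ _ => (1 : ℝ) / 9

/-- 1-D zero padding of a vector. -/
def pv {m : ℕ} (v : Fin m → ℝ) (i : ℕ) : ℝ :=
  if h : 1 ≤ i ∧ i ≤ m then v ⟨i - 1, by omega⟩ else 0

/-- The 1-D averaging operator (times 3). -/
def Aop {m : ℕ} (v : Fin m → ℝ) (i : Fin m) : ℝ :=
  pv v (i : ℕ) + pv v ((i : ℕ) + 1) + pv v ((i : ℕ) + 2)

lemma pv_add {m : ℕ} (f g : Fin m → ℝ) (i : ℕ) :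
    pv (fun a => f a + g a) i = pv f i + pv g i := by
  by_cases h : 1 ≤ i ∧ i ≤ m <;> simp [pv, h]

lemma pv_zero {m : ℕ} (i : ℕ) : pv (fun _ : Fin m => (0 : ℝ)) i = 0 := by
  by_cases h : 1 ≤ i ∧ i ≤ m <;> simp [pv, h]

lemma pv_pos {m : ℕ} (v : Fin m → ℝ) (k : ℕ) (h1 : 1 ≤ k) (h2 : k ≤ m) :
    pv v k = v ⟨k - 1, by omega⟩ := by
  simp [pv, h1, h2]

lemma pv_neg {m : ℕ} (v : Fin m → ℝ) (k : ℕ) (h : k = 0 ∨ m < k) :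
    pv v k = 0 := by
  have : ¬ (1 ≤ k ∧ k ≤ m) := by omega
  simp [pv, this]

lemma pv_mul_right {m : ℕ} (f : Fin m → ℝ) (r : ℝ) (k : ℕ) :
    pv (fun a => f a * r) k = pv f k * r := by
  by_cases h : 1 ≤ k ∧ k ≤ m <;> simp [pv, h]

lemma Aop_mul_right {m : ℕ} (f : Fin m → ℝ) (r : ℝ) (i : Fin m) :
    Aop (fun a => f a * r) i = Aop f i * r := by
  rw [Aop, Aop, pv_mul_right, pv_mul_right, pv_mul_right]
  ring

lemma Aop_zero {m : ℕ} (i : Fin m) : Aop (fun _ : Fin m => (0 : ℝ)) i = 0 := by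
  rw [Aop, pv_zero, pv_zero, pv_zero]
  ring

lemma padZ_eq {m n : ℕ} (X : Matrix (Fin m) (Fin n) ℝ) (i j : ℕ) :
    padZ X i j = pv (fun a => pv (fun b => X a b) j) i := by
  by_cases h1 : 1 ≤ i ∧ i ≤ m
  · by_cases h2 : 1 ≤ j ∧ j ≤ n
    · simp [padZ, pv, h1, h2, h1.1, h1.2, h2.1, h2.2]
    · have : ¬ (1 ≤ i ∧ i ≤ m ∧ 1 ≤ j ∧ j ≤ n) := by tauto
      simp [padZ, pv, h1, h2, this]
  · have : ¬ (1 ≤ i ∧ i ≤ m ∧ 1 ≤ j ∧ j ≤ n) := by tauto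
    simp [padZ, pv, h1, this]

/-- The key structural identity: the 2-D box convolution factors through `Aop` twice. -/
lemma conv_eq {m n : ℕ} (X : Matrix (Fin m) (Fin n) ℝ) (i : Fin m) (j : Fin n) :
    convZ boxFilter X i j = (1 / 9 : ℝ) * Aop (fun a => Aop (fun b => X a b) j) i := by
  have e1 : ∀ x : ℕ, x + 2 - 1 = x + 1 := fun x => by omega
  have e2 : ∀ x : ℕ, x + 2 - 2 = x := fun x => by omega
  simp only [convZ, boxFilter, Matrix.of_apply, Fin.sum_univ_three, Fin.val_zero, Fin.val_one,
    Fin.val_two, Nat.sub_zero, e1, e2, padZ_eq, Aop, pv_add]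
  ring

lemma convZ_apply_eq_zero {m n : ℕ} {X : Matrix (Fin m) (Fin n) ℝ} {i : Fin m} {j : Fin n}
    (h : convZ boxFilter X = 0) : Aop (fun a => Aop (fun b => X a b) j) i = 0 := by
  have := congrFun (congrFun h i) j
  rw [conv_eq] at this
  simp only [Matrix.zero_apply] at this
  linarith

/-- The periodic sequence 1, -1, 0, 1, -1, 0, ... -/
noncomputable def cseq (k : ℕ) : ℝ :=
  if k % 3 = 0 then 1 else if k % 3 = 1 then -1 else 0

lemma cseq_rec (k : ℕ) : cseq k + cseq (k + 1) + cseq (k + 2) = 0 := by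
  have h1 : (k + 1) % 3 = (k % 3 + 1) % 3 := by omega
  have h2 : (k + 2) % 3 = (k % 3 + 2) % 3 := by omega
  have h3 : k % 3 = 0 ∨ k % 3 = 1 ∨ k % 3 = 2 := by omega
  unfold cseq
  rcases h3 with h | h | h <;> rw [h] at h1 h2 ⊢ <;> norm_num at h1 h2 ⊢ <;>
    rw [h1, h2] <;> norm_num

lemma cseq_ne_zero {k : ℕ} (h : k % 3 ≠ 2) : cseq k ≠ 0 := by
  have h3 : k % 3 = 0 ∨ k % 3 = 1 := by omega
  unfold cseq
  rcases h3 with h | h <;> rw [h] <;> norm_num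

/-- Injectivity of the 1-D operator when `m % 3 ≠ 2`. -/
lemma Aop_inj {m : ℕ} (hm : 0 < m) (hgood : m % 3 ≠ 2) (v : Fin m → ℝ)
    (hv : ∀ i : Fin m, Aop v i = 0) : v = 0 := by
  have key : ∀ k, (hk : k < m) → v ⟨k, hk⟩ = v ⟨0, hm⟩ * cseq k := by
    intro k
    induction k using Nat.strong_induction_on with
    | _ k ih =>
      intro hk
      match k with
      | 0 => simp [cseq]
      | 1 =>
        have h0 := hv ⟨0, hm⟩
        rw [Aop] at h0
        simp only at h0
        rw [pv_neg v 0 (by omega), pv_pos v 1 (by omega) (by omega),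
          pv_pos v 2 (by omega) (by omega)] at h0
        have : v ⟨1, hk⟩ = - v ⟨0, hm⟩ := by
          have : (⟨2 - 1, by omega⟩ : Fin m) = ⟨1, hk⟩ := rfl
          rw [this] at h0
          have : (⟨1 - 1, by omega⟩ : Fin m) = ⟨0, hm⟩ := rfl
          rw [this] at h0
          linarith
        rw [this]
        simp [cseq]
      | (k + 2) =>
        have h0 := hv ⟨k + 1, by omega⟩
        rw [Aop] at h0
        simp only at h0
        rw [pv_pos v (k + 1) (by omega) (by omega), pv_pos v (k + 1 + 1) (by omega) (by omega),
          pv_pos v (k + 1 + 2) (by omega) (by omega)] at h0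
        have ea : (⟨k + 1 - 1, by omega⟩ : Fin m) = ⟨k, by omega⟩ := rfl
        have eb : (⟨k + 1 + 1 - 1, by omega⟩ : Fin m) = ⟨k + 1, by omega⟩ := rfl
        have ec : (⟨k + 1 + 2 - 1, by omega⟩ : Fin m) = ⟨k + 2, hk⟩ := rfl
        rw [ea, eb, ec, ih k (by omega) (by omega), ih (k + 1) (by omega) (by omega)] at h0
        have hr := cseq_rec k
        linear_combination h0 - v ⟨0, hm⟩ * hr
  have hv0 : v ⟨0, hm⟩ = 0 := by
    rcases Nat.lt_or_ge m 2 with h2 | h2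
    · have hm1 : m = 1 := by omega
      have h0 := hv ⟨0, hm⟩
      rw [Aop] at h0
      simp only at h0
      rw [pv_neg v 0 (by omega), pv_pos v 1 (by omega) (by omega),
        pv_neg v 2 (by omega)] at h0
      have : (⟨1 - 1, by omega⟩ : Fin m) = ⟨0, hm⟩ := rfl
      rw [this] at h0
      linarith
    · have h0 := hv ⟨m - 1, by omega⟩
      rw [Aop] at h0
      simp only at h0
      rw [pv_pos v (m - 1) (by omega) (by omega),
        (by omega : m - 1 + 1 = m), (by omega : m - 1 + 2 = m + 1),
        pv_pos v m (by omega) (by omega), pv_neg v (m + 1) (by omega)] at h0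
      have ea : (⟨m - 1 - 1, by omega⟩ : Fin m) = ⟨m - 2, by omega⟩ := by
        apply Fin.ext; simp; omega
      have eb : (⟨m - 1, by omega⟩ : Fin m) = ⟨m - 1, by omega⟩ := rfl
      rw [ea] at h0
      rw [key (m - 2) (by omega), key (m - 1) (by omega)] at h0
      have hr := cseq_rec (m - 2)
      rw [(by omega : m - 2 + 1 = m - 1), (by omega : m - 2 + 2 = m)] at hr
      have hcm : cseq m ≠ 0 := cseq_ne_zero (by omega)
      have : v ⟨0, hm⟩ * (cseq (m - 2) + cseq (m - 1)) = 0 := by linarith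
      rw [(by linarith : cseq (m - 2) + cseq (m - 1) = - cseq m)] at this
      have := mul_eq_zero.mp this
      rcases this with h | h
      · exact h
      · exact absurd (by linarith : cseq m = 0) hcm
  funext i
  have := key i.val i.isLt
  simp only [Fin.eta] at this
  rw [this, hv0]
  simp

/-- The periodic vector is in the kernel of the 1-D operator when `m % 3 = 2`. -/
lemma Aop_cseq {m : ℕ} (hm : m % 3 = 2) (i : Fin m) :
    Aop (fun k : Fin m => cseq (k : ℕ)) i = 0 := by
  have hm2 : 2 ≤ m := by omega
  obtain ⟨t, ht⟩ := i
  rw [Aop]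
  simp only
  rcases Nat.eq_zero_or_pos t with h0 | h1
  · subst h0
    rw [pv_neg _ 0 (by omega), pv_pos _ 1 (by omega) (by omega),
      pv_pos _ 2 (by omega) (by omega)]
    simp [cseq]
  · rcases Nat.lt_or_ge (t + 1) m with hin | hlast
    · -- interior: t ≥ 1 and t + 2 ≤ m
      rw [pv_pos _ t (by omega) (by omega), pv_pos _ (t + 1) (by omega) (by omega),
        pv_pos _ (t + 2) (by omega) (by omega)]
      simp only
      have hr := cseq_rec (t - 1)
      rw [(by omega : t - 1 + 1 = t), (by omega : t - 1 + 2 = t + 1)] at hr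
      have e1 : t + 1 - 1 = t := by omega
      have e2 : t + 2 - 1 = t + 1 := by omega
      rw [e1, e2]
      linarith
    · -- t = m - 1
      have htm : t = m - 1 := by omega
      rw [pv_pos _ t (by omega) (by omega), pv_pos _ (t + 1) (by omega) (by omega),
        pv_neg _ (t + 2) (by omega)]
      simp only
      have e1 : t + 1 - 1 = t := by omega
      rw [e1]
      have ha : (t - 1) % 3 = 0 := by omega
      have hb : t % 3 = 1 := by omega
      simp [cseq, ha, hb]

/-- `convZ boxFilter` as a linear map. -/
noncomputable def convL (m n : ℕ) :
    Matrix (Fin m) (Fin n) ℝ →ₗ[ℝ] Matrix (Fin m) (Fin n) ℝ where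
  toFun := convZ boxFilter
  map_add' X Y := by
    ext i j
    have hpad : ∀ i' j', padZ (X + Y) i' j' = padZ X i' j' + padZ Y i' j' := by
      intro i' j'
      by_cases h : 1 ≤ i' ∧ i' ≤ m ∧ 1 ≤ j' ∧ j' ≤ n <;> simp [padZ, h]
    simp [convZ, hpad, mul_add, Finset.sum_add_distrib]
  map_smul' c X := by
    ext i j
    have hpad : ∀ i' j', padZ (c • X) i' j' = c * padZ X i' j' := by
      intro i' j'
      by_cases h : 1 ≤ i' ∧ i' ≤ m ∧ 1 ≤ j' ∧ j' ≤ n <;> simp [padZ, h]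
    simp [convZ, hpad, Finset.mul_sum]
    ring_nf
    congr 1
    funext l₁
    congr 1
    funext l₂
    ring

lemma good_iff (m : ℕ) : (¬ ∃ l : ℕ, 0 < l ∧ m = 3 * l - 1) ↔ m % 3 ≠ 2 := by
  constructor
  · intro h hc
    exact h ⟨(m + 1) / 3, by omega, by omega⟩
  · rintro h ⟨l, hl, rfl⟩
    omega

/-- The convolution equation with the box blur filter and zero boundary condition has a unique
solution for every `B` iff neither `m` nor `n` is of the form `3l − 1`, `l ≥ 1`. -/
theorem stmt8 (m n : ℕ) (hm : 0 < m) (hn : 0 < n) :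
    (∀ B : Matrix (Fin m) (Fin n) ℝ, ∃! X : Matrix (Fin m) (Fin n) ℝ, convZ boxFilter X = B)
      ↔ (¬ ∃ l : ℕ, 0 < l ∧ m = 3 * l - 1) ∧ (¬ ∃ l : ℕ, 0 < l ∧ n = 3 * l - 1) := by
  rw [good_iff, good_iff]
  have hz : convZ boxFilter (0 : Matrix (Fin m) (Fin n) ℝ) = 0 := by
    ext i j
    rw [conv_eq]
    simp only [Matrix.zero_apply]
    have h1 : ∀ j' : Fin n, Aop (fun _ : Fin n => (0 : ℝ)) j' = 0 := by
      intro j'; rw [Aop, pv_zero, pv_zero, pv_zero]; ring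
    simp only [h1]
    rw [Aop, pv_zero, pv_zero, pv_zero]
    ring
  constructor
  · intro H
    have huniq0 : ∀ X : Matrix (Fin m) (Fin n) ℝ, convZ boxFilter X = 0 → X = 0 := by
      intro X hX
      obtain ⟨X₀, _, hu⟩ := H 0
      rw [hu X hX, hu 0 hz]
    constructor
    · -- m % 3 ≠ 2
      intro hbad
      have hXz : convZ boxFilter (Matrix.of fun (a : Fin m) (_ : Fin n) => cseq (a : ℕ)) = 0 := by
        ext i j
        rw [conv_eq]
        simp only [Matrix.zero_apply, Matrix.of_apply]
        have hinner : ∀ a : Fin m, Aop (fun _ : Fin n => cseq (a : ℕ)) j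
            = cseq (a : ℕ) * Aop (fun _ : Fin n => (1 : ℝ)) j := by
          intro a
          have : (fun _ : Fin n => cseq (a : ℕ)) = fun b : Fin n => (fun _ : Fin n => (1 : ℝ)) b * cseq (a : ℕ) := by
            funext b; ring
          rw [this, Aop_mul_right]
          ring
        simp only [hinner]
        have : (fun a : Fin m => cseq (a : ℕ) * Aop (fun _ : Fin n => (1 : ℝ)) j)
            = fun a : Fin m => (fun k : Fin m => cseq (k : ℕ)) a * Aop (fun _ : Fin n => (1 : ℝ)) j := rfl
        rw [this, Aop_mul_right, Aop_cseq hbad]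
        ring
      have := huniq0 _ hXz
      have h00 := congrFun (congrFun this ⟨0, hm⟩) ⟨0, hn⟩
      simp only [Matrix.of_apply, Matrix.zero_apply, cseq] at h00
      norm_num at h00
    · -- n % 3 ≠ 2
      intro hbad
      have hXz : convZ boxFilter (Matrix.of fun (_ : Fin m) (b : Fin n) => cseq (b : ℕ)) = 0 := by
        ext i j
        rw [conv_eq]
        simp only [Matrix.zero_apply, Matrix.of_apply]
        have hinner : Aop (fun b : Fin n => cseq (b : ℕ)) j = 0 := Aop_cseq hbad j
        rw [hinner, Aop_zero]
        ring
      have := huniq0 _ hXz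
      have h00 := congrFun (congrFun this ⟨0, hm⟩) ⟨0, hn⟩
      simp only [Matrix.of_apply, Matrix.zero_apply, cseq] at h00
      norm_num at h00
  · rintro ⟨hgm, hgn⟩
    have hinj : Function.Injective (convL m n) := by
      rw [← LinearMap.ker_eq_bot, LinearMap.ker_eq_bot']
      intro X hX
      have hX' : convZ boxFilter X = 0 := hX
      funext a
      have hrow : ∀ j : Fin n, Aop (fun b => X a b) j = 0 := by
        intro j
        have hcol : (fun a' => Aop (fun b => X a' b) j) = 0 := by
          apply Aop_inj hm hgm
          intro i
          exact convZ_apply_eq_zero hX'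
        exact congrFun hcol a
      have := Aop_inj hn hgn (fun b => X a b) hrow
      exact this
    have hsurj : Function.Surjective (convL m n) :=
      (LinearMap.injective_iff_surjective).mp hinj
    intro B
    obtain ⟨X, hXB⟩ := hsurj B
    refine ⟨X, hXB, fun Y hY => hinj ?_⟩
    rw [hXB]
    exact hY
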